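/- Let n be a positive integer and let r be a real number with 0 < r < n. Then cof(I^r_{n,σ-fin}) = 𝔠 = 2^{ℵ₀}: the least cardinality of a family C of subsets of ℝⁿ, each of σ-finite r-dimensional Hausdorff measure, such that every set of σ-finite r-dimensional Hausdorff measure is contained in some member of C, equals the cardinality of the continuum. -/

import Mathlib

open MeasureTheory Set
open scoped ENNReal MeasureTheory

noncomputable section


/-- A set `H ⊆ ℝⁿ` is of σ-finite `r`-dimensional Hausdorff measure if it is a countable
union of sets each of finite `r`-dimensional Hausdorff measure. -/
def SigmaFiniteHausdorff (n : ℕ) (r : ℝ) (H : Set (EuclideanSpace ℝ (Fin n))) : Prop :=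
  ∃ A : ℕ → Set (EuclideanSpace ℝ (Fin n)), H = ⋃ k, A k ∧ ∀ k, μH[r] (A k) < ⊤

/-- `cofOf J` is the least cardinality of a subfamily `C ⊆ J` such that every member of
`J` is contained in some member of `C`. -/
def cofOf {α : Type*} (J : Set (Set α)) : Cardinal :=
  sInf { c : Cardinal | ∃ C ⊆ J, (∀ A ∈ J, ∃ B ∈ C, A ⊆ B) ∧ Cardinal.mk C = c }

namespace Stmt7Aux

open Filter

/-- Configuration for the self-similar Cantor family construction. -/
structure Cfg (n : ℕ) (r : ℝ) where
  M : ℕ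
  hM : 2 ≤ M
  lam : ℝ
  hlam0 : 0 < lam
  hlam2 : lam ≤ 2⁻¹
  hlamr : lam ^ r = (M : ℝ)⁻¹
  q : Fin M × Bool → EuclideanSpace ℝ (Fin n)
  R : ℝ
  hR1 : 1 ≤ R
  hq_norm : ∀ j, ‖q j‖ ≤ R
  hq_sep : ∀ j j', j ≠ j' → 1 ≤ dist (q j) (q j')
  hsmall : 4 * R * lam ≤ 2⁻¹

variable {n : ℕ} {r : ℝ}

lemma cfg_exists (hn : 1 ≤ n) (hr0 : 0 < r) (hrn : r < (n : ℝ)) : Nonempty (Cfg n r) := by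
  classical
  have hn0 : (0:ℝ) < n := lt_of_le_of_lt hr0.le hrn
  have hnn : ((n:ℝ))⁻¹ ≤ 1 := by
    rw [inv_le_one_iff₀]
    right
    exact_mod_cast hn
  have hrinv : 0 < 1/r := by positivity
  set e : ℝ := 1/r - 1/(n:ℝ) with hedef
  have he : 0 < e := by
    have h1 : 1/(n:ℝ) < 1/r := one_div_lt_one_div_of_lt hr0 hrn
    rw [hedef]; linarith
  have sqn_pos : 0 < Real.sqrt n := Real.sqrt_pos.mpr hn0
  have sqn1 : 1 ≤ Real.sqrt n := by
    rw [show (1:ℝ) = Real.sqrt 1 by simp]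
    apply Real.sqrt_le_sqrt
    exact_mod_cast hn
  -- choose M large
  have t1 : Filter.Tendsto (fun M : ℕ => (M:ℝ) ^ (-(1/r))) atTop (nhds 0) :=
    (tendsto_rpow_neg_atTop hrinv).comp tendsto_natCast_atTop_atTop
  have t2 : Filter.Tendsto (fun M : ℕ => 32 * Real.sqrt n * (M:ℝ) ^ (-e)) atTop (nhds 0) := by
    have h := ((tendsto_rpow_neg_atTop he).comp
      tendsto_natCast_atTop_atTop).const_mul (32 * Real.sqrt n)
    simpa using h
  have ev1 : ∀ᶠ M : ℕ in atTop, (M:ℝ) ^ (-(1/r)) ≤ 2⁻¹ :=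
    t1.eventually_le_const (by norm_num)
  have ev2 : ∀ᶠ M : ℕ in atTop, 32 * Real.sqrt n * (M:ℝ) ^ (-e) ≤ 1 :=
    t2.eventually_le_const (by norm_num)
  have ev3 : ∀ᶠ M : ℕ in atTop, 2 ≤ M := eventually_ge_atTop 2
  obtain ⟨M, ⟨h1, h2⟩, hM⟩ := ((ev1.and ev2).and ev3).exists
  have hM0 : (0:ℝ) < (M:ℝ) := by exact_mod_cast (by omega : 0 < M)
  set lam : ℝ := (M:ℝ) ^ (-(1/r)) with hlamdef
  have hlam0 : 0 < lam := Real.rpow_pos_of_pos hM0 _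
  have hlam2 : lam ≤ 2⁻¹ := h1
  have hlamr : lam ^ r = (M:ℝ)⁻¹ := by
    rw [hlamdef, ← Real.rpow_mul hM0.le]
    have hexp : (-(1/r)) * r = -1 := by field_simp
    rw [hexp, Real.rpow_neg_one]
  -- the grid
  set x : ℝ := ((2*M : ℕ) : ℝ) ^ ((n:ℝ)⁻¹) with hxdef
  have h2M1 : (1:ℝ) ≤ ((2*M:ℕ):ℝ) := by exact_mod_cast (by omega : 1 ≤ 2*M)
  have hx1 : 1 ≤ x := by
    rw [hxdef, ← Real.rpow_zero ((2*M:ℕ):ℝ)]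
    exact Real.rpow_le_rpow_of_exponent_le h2M1 (by positivity)
  set G : ℕ := ⌈x⌉₊ with hGdef
  have hG0 : 0 < G := Nat.ceil_pos.mpr (lt_of_lt_of_le one_pos hx1)
  have hG1R : (1:ℝ) ≤ (G:ℝ) := by exact_mod_cast hG0
  have hxG : x ≤ (G:ℝ) := Nat.le_ceil x
  have hGx : (G:ℝ) ≤ 2*x := by
    have := Nat.ceil_lt_add_one (lt_of_lt_of_le one_pos hx1).le
    rw [← hGdef] at this
    linarith
  have hGn : 2*M ≤ G^n := by
    have hxn : x ^ (n:ℕ) = ((2*M:ℕ):ℝ) := by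
      rw [hxdef, ← Real.rpow_natCast (((2*M:ℕ):ℝ) ^ ((n:ℝ)⁻¹)) n, ← Real.rpow_mul
        (by linarith : (0:ℝ) ≤ ((2*M:ℕ):ℝ)), inv_mul_cancel₀ hn0.ne', Real.rpow_one]
    have hreal : ((2*M:ℕ):ℝ) ≤ ((G^n : ℕ):ℝ) := by
      rw [← hxn]
      push_cast
      exact pow_le_pow_left₀ (by linarith) hxG n
    exact_mod_cast hreal
  have hle : M * 2 ≤ G ^ n := by omega
  -- the points
  set e1 : Fin M × Bool ≃ Fin (M*2) :=
    (Equiv.prodCongr (Equiv.refl (Fin M)) finTwoEquiv.symm).trans finProdFinEquiv with he1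
  set v : Fin M × Bool → (Fin n → Fin G) :=
    fun j => finFunctionFinEquiv.symm (Fin.castLE hle (e1 j)) with hv
  have hv_inj : Function.Injective v := by
    intro a b hab
    apply e1.injective
    apply Fin.castLE_injective hle
    exact finFunctionFinEquiv.symm.injective hab
  set q : Fin M × Bool → EuclideanSpace ℝ (Fin n) :=
    fun j => (WithLp.equiv 2 (Fin n → ℝ)).symm (fun i => ((v j i : ℕ) : ℝ)) with hq
  have hq_apply : ∀ j i, q j i = ((v j i : ℕ) : ℝ) := by
    intro j i
    rw [hq]
    rfl
  set R : ℝ := Real.sqrt n * G with hR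
  have hR1 : 1 ≤ R := by
    rw [hR]; nlinarith
  have hq_norm : ∀ j, ‖q j‖ ≤ R := by
    intro j
    rw [EuclideanSpace.norm_eq]
    have hco : ∀ i, ‖q j i‖ ≤ (G:ℝ) := by
      intro i
      rw [hq_apply, Real.norm_eq_abs, abs_of_nonneg (Nat.cast_nonneg _)]
      exact_mod_cast (v j i).is_lt.le
    calc Real.sqrt (∑ i, ‖q j i‖ ^ 2) ≤ Real.sqrt (∑ _i : Fin n, (G:ℝ) ^ 2) := by
          apply Real.sqrt_le_sqrt
          apply Finset.sum_le_sum
          intro i _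
          exact pow_le_pow_left₀ (norm_nonneg _) (hco i) 2
      _ = Real.sqrt ((n:ℝ) * (G:ℝ) ^ 2) := by
          rw [Finset.sum_const, Finset.card_univ, Fintype.card_fin, nsmul_eq_mul]
      _ = R := by
          rw [Real.sqrt_mul (by positivity), Real.sqrt_sq (by positivity), hR]
  have hq_sep : ∀ j j', j ≠ j' → 1 ≤ dist (q j) (q j') := by
    intro j j' hjj
    have hvne : v j ≠ v j' := fun hcon => hjj (hv_inj hcon)
    obtain ⟨i, hi⟩ := Function.ne_iff.mp hvne
    have hnat : ((v j i : ℕ)) ≠ ((v j' i : ℕ)) := fun hcon => hi (Fin.val_injective hcon)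
    have habs : (1:ℝ) ≤ |((v j i : ℕ):ℝ) - ((v j' i : ℕ):ℝ)| := by
      have h2' : ((v j i : ℕ):ℤ) ≠ ((v j' i : ℕ):ℤ) := by exact_mod_cast hnat
      have := Int.one_le_abs (sub_ne_zero.2 h2')
      exact_mod_cast this
    have hsingle : dist (q j i) (q j' i) ^ 2 ≤ ∑ l, dist (q j l) (q j' l) ^ 2 :=
      Finset.single_le_sum (f := fun l => dist (q j l) (q j' l) ^ 2)
        (fun l _ => sq_nonneg _) (Finset.mem_univ i)
    calc (1:ℝ) ≤ dist (q j i) (q j' i) := by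
          rw [hq_apply, hq_apply, Real.dist_eq]
          exact habs
      _ = Real.sqrt (dist (q j i) (q j' i) ^ 2) := (Real.sqrt_sq dist_nonneg).symm
      _ ≤ Real.sqrt (∑ l, dist (q j l) (q j' l) ^ 2) := Real.sqrt_le_sqrt hsingle
      _ = dist (q j) (q j') := (EuclideanSpace.dist_eq _ _).symm
  have hsmall : 4 * R * lam ≤ 2⁻¹ := by
    have hb1 : x ≤ 2 * (M:ℝ) ^ ((n:ℝ)⁻¹) := by
      have hsplit : x = (2:ℝ) ^ ((n:ℝ)⁻¹) * (M:ℝ) ^ ((n:ℝ)⁻¹) := by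
        rw [hxdef]
        push_cast
        exact Real.mul_rpow (by norm_num) hM0.le
      have h2le : (2:ℝ) ^ ((n:ℝ)⁻¹) ≤ 2 := by
        nth_rewrite 2 [show (2:ℝ) = (2:ℝ) ^ (1:ℝ) by rw [Real.rpow_one]]
        exact Real.rpow_le_rpow_of_exponent_le (by norm_num) hnn
      have hMn : (0:ℝ) ≤ (M:ℝ) ^ ((n:ℝ)⁻¹) := (Real.rpow_pos_of_pos hM0 _).le
      rw [hsplit]
      exact mul_le_mul_of_nonneg_right h2le hMn
    have hGb : (G:ℝ) ≤ 4 * (M:ℝ) ^ ((n:ℝ)⁻¹) := by linarith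
    have hMe : (M:ℝ) ^ ((n:ℝ)⁻¹) * lam = (M:ℝ) ^ (-e) := by
      rw [hlamdef, ← Real.rpow_add hM0]
      congr 1
      rw [hedef]
      simp only [one_div]
      ring
    have hMne : (0:ℝ) < (M:ℝ) ^ (-e) := Real.rpow_pos_of_pos hM0 _
    have hGlam : (G:ℝ) * lam ≤ 4 * (M:ℝ) ^ ((n:ℝ)⁻¹) * lam :=
      mul_le_mul_of_nonneg_right hGb hlam0.le
    have hchain : 4 * R * lam ≤ 16 * Real.sqrt n * ((M:ℝ) ^ ((n:ℝ)⁻¹) * lam) := by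
      rw [hR]
      calc 4 * (Real.sqrt n * (G:ℝ)) * lam
          = (4 * Real.sqrt n) * ((G:ℝ) * lam) := by ring
        _ ≤ (4 * Real.sqrt n) * (4 * (M:ℝ) ^ ((n:ℝ)⁻¹) * lam) :=
            mul_le_mul_of_nonneg_left hGlam (by positivity)
        _ = 16 * Real.sqrt n * ((M:ℝ) ^ ((n:ℝ)⁻¹) * lam) := by ring
    rw [hMe] at hchain
    have : 16 * Real.sqrt n * (M:ℝ) ^ (-e) ≤ 2⁻¹ := by linarith
    linarith
  exact ⟨⟨M, hM, lam, hlam0, hlam2, hlamr, q, R, hR1, hq_norm, hq_sep, hsmall⟩⟩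

namespace Cfg

variable (c : Cfg n r)

lemma hlam1 : c.lam < 1 := lt_of_le_of_lt c.hlam2 (by norm_num)

lemma hR0 : 0 < c.R := lt_of_lt_of_le one_pos c.hR1

lemma summable_geom : Summable fun i : ℕ => c.R * c.lam ^ i :=
  (summable_geometric_of_lt_one c.hlam0.le c.hlam1).mul_left _

lemma norm_term_le (x : ℕ → Fin c.M × Bool) (i : ℕ) :
    ‖c.lam ^ i • c.q (x i)‖ ≤ c.R * c.lam ^ i := by
  rw [norm_smul, Real.norm_eq_abs, abs_of_nonneg (pow_nonneg c.hlam0.le i)]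
  rw [mul_comm]
  exact mul_le_mul_of_nonneg_right (c.hq_norm _) (pow_nonneg c.hlam0.le i)

lemma summable_F (x : ℕ → Fin c.M × Bool) :
    Summable fun i : ℕ => c.lam ^ i • c.q (x i) :=
  Summable.of_norm_bounded c.summable_geom (c.norm_term_le x)

/-- The coding map of the self-similar construction. -/
def F (x : ℕ → Fin c.M × Bool) : EuclideanSpace ℝ (Fin n) :=
  ∑' i : ℕ, c.lam ^ i • c.q (x i)

lemma inv_one_sub_lam_le : (1 - c.lam)⁻¹ ≤ 2 := by
  have h1 : (2:ℝ)⁻¹ ≤ 1 - c.lam := by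
    have := c.hlam2; linarith
  calc (1 - c.lam)⁻¹ ≤ ((2:ℝ)⁻¹)⁻¹ := by
        apply inv_anti₀ (by norm_num) h1
    _ = 2 := by norm_num

lemma norm_tail_le (x y : ℕ → Fin c.M × Bool) (k : ℕ) :
    ‖∑' i : ℕ, (c.lam ^ (i + k) • c.q (x (i + k)) - c.lam ^ (i + k) • c.q (y (i + k)))‖
      ≤ 4 * c.R * c.lam ^ k := by
  have bound : ∀ i : ℕ,
      ‖c.lam ^ (i + k) • c.q (x (i + k)) - c.lam ^ (i + k) • c.q (y (i + k))‖
        ≤ (2 * c.R * c.lam ^ k) * c.lam ^ i := by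
    intro i
    calc ‖c.lam ^ (i + k) • c.q (x (i + k)) - c.lam ^ (i + k) • c.q (y (i + k))‖
        ≤ ‖c.lam ^ (i + k) • c.q (x (i + k))‖ + ‖c.lam ^ (i + k) • c.q (y (i + k))‖ :=
          norm_sub_le _ _
      _ ≤ c.R * c.lam ^ (i + k) + c.R * c.lam ^ (i + k) := by
          gcongr <;> exact c.norm_term_le _ _
      _ = (2 * c.R * c.lam ^ k) * c.lam ^ i := by rw [pow_add]; ring
  have hs : HasSum (fun i : ℕ => (2 * c.R * c.lam ^ k) * c.lam ^ i)
      ((2 * c.R * c.lam ^ k) * (1 - c.lam)⁻¹) := by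
    exact (hasSum_geometric_of_lt_one c.hlam0.le c.hlam1).mul_left _
  refine (tsum_of_norm_bounded hs bound).trans ?_
  have h2 := c.inv_one_sub_lam_le
  have h5 : 2 * c.R * c.lam ^ k * (1 - c.lam)⁻¹ ≤ 2 * c.R * c.lam ^ k * 2 := by
    apply mul_le_mul_of_nonneg_left h2
    exact mul_nonneg (mul_nonneg (by norm_num) c.hR0.le) (pow_nonneg c.hlam0.le k)
  linarith

lemma sub_F_eq (x y : ℕ → Fin c.M × Bool) (k : ℕ) :
    c.F x - c.F y = (∑ i ∈ Finset.range k,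
        (c.lam ^ i • c.q (x i) - c.lam ^ i • c.q (y i))) +
      ∑' i : ℕ, (c.lam ^ (i + k) • c.q (x (i + k)) - c.lam ^ (i + k) • c.q (y (i + k))) := by
  have hg : Summable fun i : ℕ => c.lam ^ i • c.q (x i) - c.lam ^ i • c.q (y i) :=
    (c.summable_F x).sub (c.summable_F y)
  have := Summable.sum_add_tsum_nat_add (f := fun i : ℕ => c.lam ^ i • c.q (x i) - c.lam ^ i • c.q (y i))
    k hg
  rw [this]
  exact (Summable.tsum_sub (c.summable_F x) (c.summable_F y)).symm

lemma dist_F_le (x y : ℕ → Fin c.M × Bool) (k : ℕ) (h : ∀ i < k, x i = y i) :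
    dist (c.F x) (c.F y) ≤ 4 * c.R * c.lam ^ k := by
  rw [dist_eq_norm, c.sub_F_eq x y k, Finset.sum_eq_zero, zero_add]
  · exact c.norm_tail_le x y k
  · intro i hi
    rw [h i (Finset.mem_range.1 hi), sub_self]

lemma dist_F_ge (x y : ℕ → Fin c.M × Bool) (k : ℕ) (h : ∀ i < k, x i = y i)
    (hk : x k ≠ y k) : c.lam ^ k * 2⁻¹ ≤ dist (c.F x) (c.F y) := by
  rw [dist_eq_norm, c.sub_F_eq x y (k + 1)]
  have hsum : (∑ i ∈ Finset.range (k + 1),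
      (c.lam ^ i • c.q (x i) - c.lam ^ i • c.q (y i)))
        = c.lam ^ k • (c.q (x k) - c.q (y k)) := by
    rw [Finset.sum_range_succ, Finset.sum_eq_zero, zero_add, smul_sub]
    intro i hi
    rw [h i (Finset.mem_range.1 hi), sub_self]
  rw [hsum]
  set T := ∑' i : ℕ, (c.lam ^ (i + (k + 1)) • c.q (x (i + (k + 1)))
      - c.lam ^ (i + (k + 1)) • c.q (y (i + (k + 1))))
  have hmain : c.lam ^ k ≤ ‖c.lam ^ k • (c.q (x k) - c.q (y k))‖ := by
    rw [norm_smul, Real.norm_eq_abs, abs_of_nonneg (pow_nonneg c.hlam0.le k)]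
    have : (1:ℝ) ≤ ‖c.q (x k) - c.q (y k)‖ := by
      rw [← dist_eq_norm]; exact c.hq_sep _ _ hk
    nlinarith [pow_pos c.hlam0 k]
  have hT : ‖T‖ ≤ 4 * c.R * c.lam ^ (k + 1) := c.norm_tail_le x y (k + 1)
  have htri : ‖c.lam ^ k • (c.q (x k) - c.q (y k))‖
      ≤ ‖c.lam ^ k • (c.q (x k) - c.q (y k)) + T‖ + ‖T‖ := by
    calc ‖c.lam ^ k • (c.q (x k) - c.q (y k))‖
        = ‖(c.lam ^ k • (c.q (x k) - c.q (y k)) + T) - T‖ := by rw [add_sub_cancel_right]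
      _ ≤ _ := norm_sub_le _ _
  have hsm : 4 * c.R * c.lam ^ (k + 1) ≤ 2⁻¹ * c.lam ^ k := by
    have h3 : (0:ℝ) < c.lam ^ k := pow_pos c.hlam0 k
    have := c.hsmall
    calc 4 * c.R * c.lam ^ (k + 1) = (4 * c.R * c.lam) * c.lam ^ k := by ring
      _ ≤ 2⁻¹ * c.lam ^ k := by nlinarith
  linarith

lemma exists_first_diff {x y : ℕ → Fin c.M × Bool} (h : x ≠ y) :
    ∃ k, (∀ i < k, x i = y i) ∧ x k ≠ y k := by
  have h' : ∃ k, x k ≠ y k := by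
    by_contra hc; push_neg at hc; exact h (funext hc)
  exact ⟨Nat.find h', fun i hi => by simpa using Nat.find_min h' hi, Nat.find_spec h'⟩

lemma F_inj : Function.Injective c.F := by
  intro x y hxy
  by_contra h
  obtain ⟨k, h1, h2⟩ := c.exists_first_diff h
  have h3 := c.dist_F_ge x y k h1 h2
  rw [hxy, dist_self] at h3
  have h4 := pow_pos c.hlam0 k
  nlinarith

lemma continuous_F : Continuous c.F := by
  apply continuous_tsum (u := fun i : ℕ => c.R * c.lam ^ i)
  · intro i
    exact (continuous_of_discreteTopology.comp (continuous_apply i)).const_smul (c.lam ^ i)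
  · exact c.summable_geom
  · intro i x; exact c.norm_term_le x i

/-- The continuum family of Cantor sets. -/
def K (t : ℕ → Bool) : Set (EuclideanSpace ℝ (Fin n)) :=
  c.F '' {x | ∀ i, (x i).2 = t i}

lemma isCompact_K (t : ℕ → Bool) : IsCompact (c.K t) := by
  apply IsCompact.image _ c.continuous_F
  have : IsClosed {x : ℕ → Fin c.M × Bool | ∀ i, (x i).2 = t i} := by
    have : {x : ℕ → Fin c.M × Bool | ∀ i, (x i).2 = t i} =
        ⋂ i, (fun x : ℕ → Fin c.M × Bool => (x i).2) ⁻¹' {t i} := by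
      ext x; simp
    rw [this]
    exact isClosed_iInter fun i =>
      (IsClosed.preimage ((continuous_snd.comp (continuous_apply i))) isClosed_singleton)
  exact this.isCompact

lemma measurableSet_K (t : ℕ → Bool) : MeasurableSet (c.K t) :=
  (c.isCompact_K t).isClosed.measurableSet

lemma disjoint_K : Pairwise (Function.onFun Disjoint c.K) := by
  intro t s hts
  rw [Function.onFun, Set.disjoint_left]
  rintro a ⟨x, hx, rfl⟩ ⟨y, hy, hxy⟩
  have : y = x := c.F_inj hxy
  subst this
  exact hts (funext fun i => (hx i).symm.trans (hy i))

lemma lam_pow_rpow (k : ℕ) : (c.lam ^ k) ^ r = ((c.M : ℝ)⁻¹) ^ k := by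
  calc (c.lam ^ k) ^ r = (c.lam ^ (k : ℝ)) ^ r := by rw [Real.rpow_natCast]
    _ = c.lam ^ ((k : ℝ) * r) := (Real.rpow_mul c.hlam0.le _ _).symm
    _ = (c.lam ^ r) ^ (k : ℝ) := by rw [mul_comm, Real.rpow_mul c.hlam0.le]
    _ = ((c.M : ℝ)⁻¹) ^ (k : ℝ) := by rw [c.hlamr]
    _ = ((c.M : ℝ)⁻¹) ^ k := Real.rpow_natCast _ k

lemma meas_K_le (hr0 : 0 < r) (t : ℕ → Bool) :
    μH[r] (c.K t) ≤ ENNReal.ofReal ((4 * c.R) ^ r) := by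
  classical
  have hM0 : (0:ℝ) < (c.M : ℝ) := by
    have := c.hM; positivity
  set D : ℕ → ℝ := fun k => 4 * c.R * c.lam ^ k with hD
  have hDpos : ∀ k, 0 < D k := fun k => by
    have := c.hR0; have := pow_pos c.hlam0 k
    simp only [hD]; nlinarith
  set P : ∀ _ : ℕ, (_ → Fin c.M) → Set (EuclideanSpace ℝ (Fin n)) := fun k w =>
    c.F '' {x | (∀ i, (x i).2 = t i) ∧ ∀ i : Fin k, (x i).1 = w i} with hP
  have hdiam : ∀ k w, EMetric.diam (P k w) ≤ ENNReal.ofReal (D k) := by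
    intro k w
    apply EMetric.diam_le
    rintro _ ⟨x, hx, rfl⟩ _ ⟨y, hy, rfl⟩
    rw [edist_dist]
    apply ENNReal.ofReal_le_ofReal
    apply c.dist_F_le
    intro i hi
    exact Prod.ext (((hx.2 ⟨i, hi⟩)).trans ((hy.2 ⟨i, hi⟩)).symm)
      ((hx.1 i).trans (hy.1 i).symm)
  have hcover : ∀ k, c.K t ⊆ ⋃ w : Fin k → Fin c.M, P k w := by
    rintro k _ ⟨x, hx, rfl⟩
    exact mem_iUnion.2 ⟨fun i => (x i).1, ⟨x, ⟨hx, fun i => rfl⟩, rfl⟩⟩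
  have hrt : Tendsto (fun k => ENNReal.ofReal (D k)) atTop (nhds 0) := by
    rw [← ENNReal.ofReal_zero]
    apply ENNReal.tendsto_ofReal
    have := (tendsto_pow_atTop_nhds_zero_of_lt_one c.hlam0.le c.hlam1).const_mul (4 * c.R)
    simpa [hD, mul_zero] using this
  have hmain := MeasureTheory.Measure.hausdorffMeasure_le_liminf_sum r (c.K t)
    (fun k => ENNReal.ofReal (D k)) hrt P
    (Filter.Eventually.of_forall fun k => hdiam k)
    (Filter.Eventually.of_forall hcover)
  refine hmain.trans ?_
  have hsum : ∀ k : ℕ, (∑ w : Fin k → Fin c.M, EMetric.diam (P k w) ^ r)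
      ≤ ENNReal.ofReal ((4 * c.R) ^ r) := by
    intro k
    have hterm : ∀ w : Fin k → Fin c.M, EMetric.diam (P k w) ^ r
        ≤ ENNReal.ofReal ((4 * c.R) ^ r) * (ENNReal.ofReal ((c.M : ℝ)⁻¹)) ^ k := by
      intro w
      calc EMetric.diam (P k w) ^ r ≤ (ENNReal.ofReal (D k)) ^ r :=
            ENNReal.rpow_le_rpow (hdiam k w) hr0.le
        _ = ENNReal.ofReal ((D k) ^ r) := ENNReal.ofReal_rpow_of_pos (hDpos k)
        _ = ENNReal.ofReal ((4 * c.R) ^ r * ((c.M : ℝ)⁻¹) ^ k) := by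
            rw [hD]
            congr 1
            rw [Real.mul_rpow (by nlinarith [c.hR0] : (0:ℝ) ≤ 4 * c.R)
              (pow_nonneg c.hlam0.le k), c.lam_pow_rpow k]
        _ = ENNReal.ofReal ((4 * c.R) ^ r) * (ENNReal.ofReal ((c.M : ℝ)⁻¹)) ^ k := by
            rw [ENNReal.ofReal_mul (Real.rpow_nonneg (by nlinarith [c.hR0]) r),
              ENNReal.ofReal_pow (by positivity)]
    calc (∑ w : Fin k → Fin c.M, EMetric.diam (P k w) ^ r)
        ≤ (Finset.univ : Finset (Fin k → Fin c.M)).card •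
            (ENNReal.ofReal ((4 * c.R) ^ r) * (ENNReal.ofReal ((c.M : ℝ)⁻¹)) ^ k) :=
          Finset.sum_le_card_nsmul _ _ _ (fun w _ => hterm w)
      _ = (c.M ^ k : ℕ) * (ENNReal.ofReal ((4 * c.R) ^ r)
            * (ENNReal.ofReal ((c.M : ℝ)⁻¹)) ^ k) := by
          rw [nsmul_eq_mul, Finset.card_univ, Fintype.card_fun, Fintype.card_fin,
            Fintype.card_fin]
      _ = ENNReal.ofReal ((4 * c.R) ^ r) := by
          have h1 : ENNReal.ofReal ((c.M : ℝ)⁻¹) = ((c.M : ℕ) : ℝ≥0∞)⁻¹ := by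
            rw [ENNReal.ofReal_inv_of_pos hM0, ENNReal.ofReal_natCast]
          rw [h1]
          push_cast
          rw [mul_comm, mul_assoc, ← mul_pow]
          have h2 : ((c.M : ℝ≥0∞))⁻¹ * (c.M : ℝ≥0∞) = 1 := by
            apply ENNReal.inv_mul_cancel
            · exact_mod_cast Nat.cast_ne_zero.mpr (by have := c.hM; omega : c.M ≠ 0)
            · exact ENNReal.natCast_ne_top _
          rw [h2, one_pow, mul_one]
  calc Filter.liminf (fun k => ∑ w : Fin k → Fin c.M, EMetric.diam (P k w) ^ r) atTop
      ≤ Filter.liminf (fun _ : ℕ => ENNReal.ofReal ((4 * c.R) ^ r)) atTop :=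
        Filter.liminf_le_liminf (Filter.Eventually.of_forall hsum)
    _ = ENNReal.ofReal ((4 * c.R) ^ r) := Filter.liminf_const _

/-- Reciprocal of the branching number. -/
def mi : ℝ := ((c.M : ℕ) : ℝ)⁻¹

lemma hmi0 : 0 < c.mi := by
  have := c.hM; rw [mi]; positivity

lemma hmi2 : c.mi ≤ 2⁻¹ := by
  rw [mi]
  exact inv_anti₀ (by norm_num) (by exact_mod_cast c.hM)

lemma hmi1 : c.mi < 1 := lt_of_le_of_lt c.hmi2 (by norm_num)

lemma hM0R : (0:ℝ) < (c.M : ℝ) := by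
  have := c.hM
  exact_mod_cast (by omega : 0 < c.M)

lemma hMmi : (c.M : ℝ) * c.mi = 1 := by
  rw [mi]
  exact mul_inv_cancel₀ c.hM0R.ne'

lemma inv_one_sub_mi_le : (1 - c.mi)⁻¹ ≤ 2 := by
  have h1 : (2:ℝ)⁻¹ ≤ 1 - c.mi := by have := c.hmi2; linarith
  calc (1 - c.mi)⁻¹ ≤ ((2:ℝ)⁻¹)⁻¹ := inv_anti₀ (by norm_num) h1
    _ = 2 := by norm_num

/-- Digit-reading functional. -/
def psi (x : ℕ → Fin c.M × Bool) : ℝ := ∑' i : ℕ, (((x i).1 : ℕ) : ℝ) * c.mi ^ (i + 1)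

lemma psi_term_le (x : ℕ → Fin c.M × Bool) (i : ℕ) :
    ‖(((x i).1 : ℕ) : ℝ) * c.mi ^ (i + 1)‖ ≤ c.mi ^ i := by
  rw [Real.norm_eq_abs, abs_of_nonneg
    (mul_nonneg (Nat.cast_nonneg _) (pow_nonneg c.hmi0.le _))]
  have h1 : (((x i).1 : ℕ) : ℝ) ≤ (c.M : ℝ) := by
    exact_mod_cast (Fin.is_lt _).le
  calc (((x i).1 : ℕ) : ℝ) * c.mi ^ (i + 1) ≤ (c.M : ℝ) * c.mi ^ (i + 1) := by
        apply mul_le_mul_of_nonneg_right h1 (pow_nonneg c.hmi0.le _)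
    _ = ((c.M : ℝ) * c.mi) * c.mi ^ i := by ring
    _ = c.mi ^ i := by rw [c.hMmi, one_mul]

lemma summable_psi (x : ℕ → Fin c.M × Bool) :
    Summable fun i : ℕ => (((x i).1 : ℕ) : ℝ) * c.mi ^ (i + 1) :=
  Summable.of_norm_bounded (summable_geometric_of_lt_one c.hmi0.le c.hmi1)
    (c.psi_term_le x)

lemma psi_diff_le (x y : ℕ → Fin c.M × Bool) (k : ℕ) (h : ∀ i < k, x i = y i) :
    |c.psi x - c.psi y| ≤ 4 * c.mi ^ k := by
  have hg : Summable fun i : ℕ =>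
      (((x i).1 : ℕ) : ℝ) * c.mi ^ (i + 1) - (((y i).1 : ℕ) : ℝ) * c.mi ^ (i + 1) :=
    (c.summable_psi x).sub (c.summable_psi y)
  have hsplit : c.psi x - c.psi y = (∑ i ∈ Finset.range k,
      ((((x i).1 : ℕ) : ℝ) * c.mi ^ (i + 1) - (((y i).1 : ℕ) : ℝ) * c.mi ^ (i + 1))) +
      ∑' i : ℕ, ((((x (i + k)).1 : ℕ) : ℝ) * c.mi ^ (i + k + 1)
        - (((y (i + k)).1 : ℕ) : ℝ) * c.mi ^ (i + k + 1)) := by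
    rw [psi, psi, ← Summable.tsum_sub (c.summable_psi x) (c.summable_psi y)]
    exact (Summable.sum_add_tsum_nat_add k hg).symm
  rw [hsplit, Finset.sum_eq_zero, zero_add]
  · have bound : ∀ i : ℕ, ‖(((x (i + k)).1 : ℕ) : ℝ) * c.mi ^ (i + k + 1)
        - (((y (i + k)).1 : ℕ) : ℝ) * c.mi ^ (i + k + 1)‖ ≤ (2 * c.mi ^ k) * c.mi ^ i := by
      intro i
      calc ‖(((x (i + k)).1 : ℕ) : ℝ) * c.mi ^ (i + k + 1)
            - (((y (i + k)).1 : ℕ) : ℝ) * c.mi ^ (i + k + 1)‖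
          ≤ ‖(((x (i + k)).1 : ℕ) : ℝ) * c.mi ^ (i + k + 1)‖
            + ‖(((y (i + k)).1 : ℕ) : ℝ) * c.mi ^ (i + k + 1)‖ := norm_sub_le _ _
        _ ≤ c.mi ^ (i + k) + c.mi ^ (i + k) := by
            gcongr <;> exact c.psi_term_le _ _
        _ = (2 * c.mi ^ k) * c.mi ^ i := by rw [pow_add]; ring
    have hs : HasSum (fun i : ℕ => (2 * c.mi ^ k) * c.mi ^ i)
        ((2 * c.mi ^ k) * (1 - c.mi)⁻¹) :=
      (hasSum_geometric_of_lt_one c.hmi0.le c.hmi1).mul_left _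
    have hmain := tsum_of_norm_bounded hs bound
    rw [Real.norm_eq_abs] at hmain
    refine hmain.trans ?_
    have h2 := c.inv_one_sub_mi_le
    have h5 : 2 * c.mi ^ k * (1 - c.mi)⁻¹ ≤ 2 * c.mi ^ k * 2 := by
      apply mul_le_mul_of_nonneg_left h2
      exact mul_nonneg (by norm_num) (pow_nonneg c.hmi0.le k)
    nlinarith [pow_pos c.hmi0 k]
  · intro i hi
    rw [h i (Finset.mem_range.1 hi), sub_self]

open Classical in
/-- A Hölder map collapsing each Cantor set onto `[0,1]`. -/
def phi (z : EuclideanSpace ℝ (Fin n)) : ℝ :=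
  if h : ∃ x, c.F x = z then c.psi h.choose else 0

lemma phi_F (x : ℕ → Fin c.M × Bool) : c.phi (c.F x) = c.psi x := by
  have h : ∃ y, c.F y = c.F x := ⟨x, rfl⟩
  rw [phi, dif_pos h]
  exact congrArg c.psi (c.F_inj h.choose_spec)

lemma phi_holder_bound (hr0 : 0 < r) (x y : ℕ → Fin c.M × Bool) (hxy : x ≠ y) :
    |c.psi x - c.psi y| ≤ (4 * 2 ^ r) * dist (c.F x) (c.F y) ^ r := by
  obtain ⟨k, h1, h2⟩ := c.exists_first_diff hxy
  have key1 := c.psi_diff_le x y k h1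
  have key2 := c.dist_F_ge x y k h1 h2
  have h2r : (0:ℝ) < 2 ^ r := Real.rpow_pos_of_pos two_pos r
  have key3 : c.mi ^ k ≤ 2 ^ r * dist (c.F x) (c.F y) ^ r := by
    have hd : (c.lam ^ k * 2⁻¹) ^ r ≤ dist (c.F x) (c.F y) ^ r :=
      Real.rpow_le_rpow (mul_nonneg (pow_nonneg c.hlam0.le k) (by norm_num)) key2 hr0.le
    have he : (c.lam ^ k * 2⁻¹) ^ r = c.mi ^ k * ((2:ℝ) ^ r)⁻¹ := by
      rw [Real.mul_rpow (pow_nonneg c.hlam0.le k) (by norm_num),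
        c.lam_pow_rpow k, Real.inv_rpow (by norm_num : (0:ℝ) ≤ 2)]
      rw [mi]
    rw [he] at hd
    have hmul := mul_le_mul_of_nonneg_left hd h2r.le
    have heq : (2:ℝ) ^ r * (c.mi ^ k * ((2:ℝ) ^ r)⁻¹) = c.mi ^ k := by
      field_simp
    rw [heq] at hmul
    exact hmul
  calc |c.psi x - c.psi y| ≤ 4 * c.mi ^ k := key1
    _ ≤ 4 * (2 ^ r * dist (c.F x) (c.F y) ^ r) := by
        apply mul_le_mul_of_nonneg_left key3 (by norm_num)
    _ = (4 * 2 ^ r) * dist (c.F x) (c.F y) ^ r := by ring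

lemma holderOnWith_phi (hr0 : 0 < r) (t : ℕ → Bool) :
    HolderOnWith (4 * 2 ^ r : ℝ).toNNReal r.toNNReal c.phi (c.K t) := by
  rintro a ⟨x, hx, rfl⟩ b ⟨y, hy, rfl⟩
  rcases eq_or_ne x y with rfl | hxy
  · simp
  · have hb := c.phi_holder_bound hr0 x y hxy
    have hdpos : 0 < dist (c.F x) (c.F y) :=
      dist_pos.2 (fun hcon => hxy (c.F_inj hcon))
    have h2r : (0:ℝ) < 2 ^ r := Real.rpow_pos_of_pos two_pos r
    rw [edist_dist, edist_dist, Real.dist_eq, c.phi_F, c.phi_F]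
    calc ENNReal.ofReal |c.psi x - c.psi y|
        ≤ ENNReal.ofReal ((4 * 2 ^ r) * dist (c.F x) (c.F y) ^ r) :=
          ENNReal.ofReal_le_ofReal hb
      _ = ENNReal.ofReal (4 * 2 ^ r) * ENNReal.ofReal (dist (c.F x) (c.F y) ^ r) :=
          ENNReal.ofReal_mul (by positivity)
      _ = ((4 * 2 ^ r : ℝ).toNNReal : ℝ≥0∞)
            * ENNReal.ofReal (dist (c.F x) (c.F y)) ^ ((r.toNNReal : ℝ)) := by
          rw [← ENNReal.ofReal_rpow_of_pos hdpos, Real.coe_toNNReal _ hr0.le]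
          rfl

lemma mem_image_phi (t : ℕ → Bool) {ξ : ℝ} (hξ0 : 0 ≤ ξ) (hξ1 : ξ < 1) :
    ξ ∈ c.phi '' (c.K t) := by
  set b : ℕ → ℤ := fun i => ⌊ξ * (c.M : ℝ) ^ i⌋ with hbdef
  have hfl : ∀ i, ((b i : ℝ)) ≤ ξ * (c.M : ℝ) ^ i ∧ ξ * (c.M : ℝ) ^ i < b i + 1 :=
    fun i => ⟨Int.floor_le _, Int.lt_floor_add_one _⟩
  have hd : ∀ i, 0 ≤ b (i+1) - (c.M : ℤ) * b i ∧ b (i+1) - (c.M : ℤ) * b i < (c.M : ℤ) := by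
    intro i
    obtain ⟨l1, u1⟩ := hfl i
    obtain ⟨l2, u2⟩ := hfl (i+1)
    have hMp := c.hM0R
    have m1 : (c.M:ℝ) * (b i : ℝ) ≤ ξ * (c.M:ℝ) ^ (i+1) := by
      have h := mul_le_mul_of_nonneg_left l1 hMp.le
      calc (c.M:ℝ) * (b i : ℝ) ≤ (c.M:ℝ) * (ξ * (c.M:ℝ)^i) := h
        _ = ξ * (c.M:ℝ)^(i+1) := by ring
    have m2 : ξ * (c.M:ℝ)^(i+1) < (c.M:ℝ) * (b i : ℝ) + (c.M:ℝ) := by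
      have h := mul_lt_mul_of_pos_left u1 hMp
      calc ξ * (c.M:ℝ)^(i+1) = (c.M:ℝ) * (ξ * (c.M:ℝ)^i) := by ring
        _ < (c.M:ℝ) * ((b i : ℝ) + 1) := h
        _ = (c.M:ℝ) * (b i : ℝ) + (c.M:ℝ) := by ring
    constructor
    · have hr1 : (c.M:ℝ) * (b i : ℝ) < (b (i+1) : ℝ) + 1 := lt_of_le_of_lt m1 u2
      have hz : (c.M : ℤ) * b i < b (i+1) + 1 := by exact_mod_cast hr1
      omega
    · have hr2 : (b (i+1) : ℝ) < (c.M:ℝ) * (b i : ℝ) + (c.M:ℝ) := lt_of_le_of_lt l2 m2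
      have hz : b (i+1) < (c.M:ℤ) * b i + (c.M:ℤ) := by exact_mod_cast hr2
      omega
  set a : ℕ → ℕ := fun i => (b (i+1) - (c.M : ℤ) * b i).toNat with hadef
  have haM : ∀ i, a i < c.M := by
    intro i
    have h := hd i
    simp only [hadef]
    omega
  set xd : ℕ → Fin c.M × Bool := fun i => (⟨a i, haM i⟩, t i) with hxddef
  have hcast : ∀ i, (((xd i).1 : ℕ) : ℝ) = (b (i+1) : ℝ) - (c.M : ℝ) * (b i : ℝ) := by
    intro i
    have h0 := (hd i).1
    have hz : ((a i : ℕ) : ℤ) = b (i+1) - (c.M : ℤ) * b i := by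
      simp only [hadef]
      omega
    have : (((xd i).1 : ℕ) : ℤ) = b (i+1) - (c.M : ℤ) * b i := hz
    exact_mod_cast this
  have hb0 : b 0 = 0 := by
    simp only [hbdef, pow_zero, mul_one]
    exact Int.floor_eq_zero_iff.mpr ⟨hξ0, hξ1⟩
  have hS : ∀ k, (∑ i ∈ Finset.range k, (((xd i).1 : ℕ) : ℝ) * c.mi ^ (i+1))
      = (b k : ℝ) * c.mi ^ k := by
    intro k
    induction k with
    | zero => simp [hb0]
    | succ k ih =>
      rw [Finset.sum_range_succ, ih, hcast k]
      have hMk : (c.M:ℝ) * c.mi ^ (k+1) = c.mi ^ k := by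
        calc (c.M:ℝ) * c.mi ^ (k+1) = c.mi ^ k * ((c.M:ℝ) * c.mi) := by ring
          _ = c.mi ^ k := by rw [c.hMmi, mul_one]
      linear_combination (-(b k : ℝ)) * hMk
  have hlim : Filter.Tendsto (fun k => (b k : ℝ) * c.mi ^ k) atTop (nhds ξ) := by
    have hbd : ∀ k, ‖(b k : ℝ) * c.mi ^ k - ξ‖ ≤ c.mi ^ k := by
      intro k
      obtain ⟨l, u⟩ := hfl k
      have hmik : (0:ℝ) < c.mi ^ k := pow_pos c.hmi0 k
      have hMmik : (c.M:ℝ) ^ k * c.mi ^ k = 1 := by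
        rw [← mul_pow, c.hMmi, one_pow]
      have p1 := mul_le_mul_of_nonneg_right l hmik.le
      have p2 := mul_lt_mul_of_pos_right u hmik
      have p3 : ξ * (c.M:ℝ)^k * c.mi^k = ξ := by
        rw [mul_assoc, hMmik, mul_one]
      rw [Real.norm_eq_abs, abs_le]
      constructor <;> nlinarith
    have h0 : Filter.Tendsto (fun k => (b k:ℝ) * c.mi^k - ξ) atTop (nhds 0) :=
      squeeze_zero_norm hbd (tendsto_pow_atTop_nhds_zero_of_lt_one c.hmi0.le c.hmi1)
    have h1 := h0.add (tendsto_const_nhds : Filter.Tendsto (fun _ : ℕ => ξ) atTop (nhds ξ))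
    simpa using h1
  have hpsi : c.psi xd = ξ := by
    have h1 := (c.summable_psi xd).hasSum.tendsto_sum_nat
    have h2 : Filter.Tendsto
        (fun k => ∑ i ∈ Finset.range k, (((xd i).1 : ℕ) : ℝ) * c.mi ^ (i+1))
        atTop (nhds ξ) := hlim.congr (fun k => (hS k).symm)
    exact tendsto_nhds_unique h1 h2
  exact ⟨c.F xd, ⟨xd, fun i => rfl, rfl⟩, by rw [c.phi_F]; exact hpsi⟩

lemma meas_K_pos (hr0 : 0 < r) (t : ℕ → Bool) : 0 < μH[r] (c.K t) := by
  rw [pos_iff_ne_zero]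
  intro h0
  have hH := c.holderOnWith_phi hr0 t
  have himg := hH.hausdorffMeasure_image_le (Real.toNNReal_pos.mpr hr0) zero_le_one
  have hexp : ((r.toNNReal : ℝ) * 1) = r := by
    rw [mul_one, Real.coe_toNNReal _ hr0.le]
  rw [hexp] at himg
  have hone : (1:ℝ≥0∞) ≤ μH[(1:ℝ)] (c.phi '' c.K t) := by
    have hsub : Ico (0:ℝ) 1 ⊆ c.phi '' c.K t := fun ξ hξ => c.mem_image_phi t hξ.1 hξ.2
    calc (1:ℝ≥0∞) = μH[(1:ℝ)] (Ico (0:ℝ) 1) := by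
          rw [hausdorffMeasure_real]
          simp
      _ ≤ _ := measure_mono hsub
  rw [h0, mul_zero] at himg
  exact absurd (hone.trans himg) (by simp)

end Cfg

lemma exists_family (hn : 1 ≤ n) (hr0 : 0 < r) (hrn : r < (n : ℝ)) :
    ∃ K : (ℕ → Bool) → Set (EuclideanSpace ℝ (Fin n)),
      (∀ t, MeasurableSet (K t)) ∧ (∀ t, 0 < μH[r] (K t)) ∧
      (∀ t, μH[r] (K t) < ⊤) ∧ Pairwise (Function.onFun Disjoint K) := by
  obtain ⟨c⟩ := cfg_exists hn hr0 hrn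
  exact ⟨c.K, c.measurableSet_K, c.meas_K_pos hr0,
    fun t => lt_of_le_of_lt (c.meas_K_le hr0 t) ENNReal.ofReal_lt_top, c.disjoint_K⟩

/-- Any σ-finite set absorbs only countably many members of the family. -/
lemma countable_absorbed {K : (ℕ → Bool) → Set (EuclideanSpace ℝ (Fin n))}
    (hmeas : ∀ t, MeasurableSet (K t)) (hpos : ∀ t, 0 < μH[r] (K t))
    (hdisj : Pairwise (Function.onFun Disjoint K))
    {S : Set (EuclideanSpace ℝ (Fin n))} (hS : SigmaFiniteHausdorff n r S) :
    Set.Countable {t | K t ⊆ S} := by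
  obtain ⟨A, hSA, hAfin⟩ := hS
  set B : ℕ → Set (EuclideanSpace ℝ (Fin n)) := fun k => toMeasurable μH[r] (A k) with hB
  have hBmeas : ∀ k, MeasurableSet (B k) := fun k => measurableSet_toMeasurable _ _
  have hBfin : ∀ k, μH[r] (B k) ≠ ⊤ := fun k => by
    rw [hB]
    simpa [measure_toMeasurable] using (hAfin k).ne
  have hsub : {t | K t ⊆ S} ⊆ ⋃ k, {t | 0 < (μH[r].restrict (B k)) (K t)} := by
    intro t ht
    have hKt : K t = ⋃ k, K t ∩ A k := by
      rw [← inter_iUnion]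
      exact (inter_eq_left.mpr (by rw [← hSA]; exact ht)).symm
    have hex : ∃ k, μH[r] (K t ∩ A k) ≠ 0 := by
      by_contra hc; push_neg at hc
      have hz : μH[r] (K t) = 0 := by
        rw [hKt]; exact measure_iUnion_null hc
      exact (hpos t).ne' hz
    obtain ⟨k, hk⟩ := hex
    refine mem_iUnion.2 ⟨k, ?_⟩
    have hle : μH[r] (K t ∩ A k) ≤ μH[r] (K t ∩ B k) :=
      measure_mono (inter_subset_inter_right _ (subset_toMeasurable _ _))
    have hkpos : 0 < μH[r] (K t ∩ B k) := lt_of_lt_of_le (pos_iff_ne_zero.2 hk) hle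
    simpa [Measure.restrict_apply' (hBmeas k)] using hkpos
  apply Set.Countable.mono hsub
  apply countable_iUnion
  intro k
  apply Measure.countable_meas_pos_of_disjoint_of_meas_iUnion_ne_top
    (μH[r].restrict (B k)) hmeas hdisj
  apply ne_top_of_le_ne_top (hBfin k)
  rw [Measure.restrict_apply' (hBmeas k)]
  exact measure_mono inter_subset_right

lemma lower_bound (hn : 1 ≤ n) (hr0 : 0 < r) (hrn : r < (n : ℝ))
    {C : Set (Set (EuclideanSpace ℝ (Fin n)))}
    (hC : C ⊆ {H | SigmaFiniteHausdorff n r H})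
    (hcof : ∀ A ∈ {H | SigmaFiniteHausdorff n r H}, ∃ B ∈ C, A ⊆ B) :
    Cardinal.continuum ≤ Cardinal.mk C := by
  obtain ⟨K, hmeas, hpos, hfin, hdisj⟩ := exists_family hn hr0 hrn
  have hmem : ∀ t : ℕ → Bool, SigmaFiniteHausdorff n r (K t) := fun t =>
    ⟨fun _ => K t, (iUnion_const _).symm, fun _ => hfin t⟩
  have hch : ∀ t : ℕ → Bool, ∃ B : C, K t ⊆ (B : Set _) := by
    intro t
    obtain ⟨B, hBC, hKB⟩ := hcof (K t) (hmem t)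
    exact ⟨⟨B, hBC⟩, hKB⟩
  choose Φ hΦ using hch
  have hfib : ∀ B : C, Set.Countable {t | Φ t = B} := by
    intro B
    have hBmem : SigmaFiniteHausdorff n r (B : Set _) := hC B.2
    apply Set.Countable.mono _ (countable_absorbed hmeas hpos hdisj hBmem)
    intro t ht
    have h1 : Φ t = B := ht
    have h2 := hΦ t
    rw [h1] at h2
    exact h2
  have h1 : Cardinal.mk (ℕ → Bool) = Cardinal.continuum := by
    rw [← Cardinal.power_def, Cardinal.mk_bool, Cardinal.mk_eq_aleph0 ℕ,
      Cardinal.two_power_aleph0]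
  have h2 : Cardinal.mk (ℕ → Bool) ≤ Cardinal.mk C * Cardinal.aleph0 := by
    calc Cardinal.mk (ℕ → Bool)
        = Cardinal.mk (Σ B : C, {t | Φ t = B}) :=
          (Cardinal.mk_congr (Equiv.sigmaFiberEquiv Φ)).symm
      _ = Cardinal.sum (fun B : C => Cardinal.mk {t | Φ t = B}) := Cardinal.mk_sigma _
      _ ≤ Cardinal.sum (fun _ : C => Cardinal.aleph0) := by
          apply Cardinal.sum_le_sum
          intro B
          have := (hfib B).to_subtype
          exact Cardinal.mk_le_aleph0
      _ = Cardinal.mk C * Cardinal.aleph0 := Cardinal.sum_const' _ _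
  by_contra hcon
  push_neg at hcon
  have h3 : Cardinal.mk C * Cardinal.aleph0 < Cardinal.continuum :=
    Cardinal.mul_lt_of_lt Cardinal.aleph0_le_continuum hcon Cardinal.aleph0_lt_continuum
  rw [h1] at h2
  exact absurd (h2.trans_lt h3) (lt_irrefl _)

lemma upper_bound (hr0 : 0 < r) :
    ∃ C ⊆ {H | SigmaFiniteHausdorff n r H},
      (∀ A ∈ {H | SigmaFiniteHausdorff n r H}, ∃ B ∈ C, A ⊆ B) ∧
      Cardinal.mk C ≤ Cardinal.continuum := by
  classical
  set S : Set (Set (EuclideanSpace ℝ (Fin n))) :=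
    {s | MeasurableSet s ∧ μH[r] s < ⊤} with hSdef
  set G : (ℕ → S) → Set (EuclideanSpace ℝ (Fin n)) := fun g => ⋃ k, (g k : Set _) with hGdef
  refine ⟨Set.range G, ?_, ?_, ?_⟩
  · rintro _ ⟨g, rfl⟩
    exact ⟨fun k => g k, rfl, fun k => (g k).2.2⟩
  · rintro A ⟨Aseq, hAeq, hAfin⟩
    refine ⟨G (fun k => ⟨toMeasurable μH[r] (Aseq k), measurableSet_toMeasurable _ _, ?_⟩),
      ⟨_, rfl⟩, ?_⟩
    · rw [measure_toMeasurable]; exact hAfin _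
    · rw [hAeq]
      exact iUnion_mono (fun k => subset_toMeasurable _ _)
  · have hmeascard : Cardinal.mk {s : Set (EuclideanSpace ℝ (Fin n)) | MeasurableSet s}
        ≤ Cardinal.continuum := by
      have hgen := MeasurableSpace.generateFrom_countableGeneratingSet
        (α := EuclideanSpace ℝ (Fin n))
      have hcnt : Cardinal.mk (MeasurableSpace.countableGeneratingSet
          (EuclideanSpace ℝ (Fin n))) ≤ Cardinal.continuum := by
        have := (MeasurableSpace.countable_countableGeneratingSet
          (α := EuclideanSpace ℝ (Fin n))).to_subtype
        exact Cardinal.mk_le_aleph0.trans Cardinal.aleph0_le_continuum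
      have hle := MeasurableSpace.cardinal_measurableSet_le_continuum hcnt
      rw [hgen] at hle
      exact hle
    have hScard : Cardinal.mk S ≤ Cardinal.continuum := by
      refine le_trans ?_ hmeascard
      apply Cardinal.mk_le_mk_of_subset
      intro s hs
      exact hs.1
    calc Cardinal.mk (Set.range G) ≤ Cardinal.mk (ℕ → S) := Cardinal.mk_range_le
      _ = Cardinal.mk S ^ Cardinal.aleph0 := by
          rw [← Cardinal.power_def, Cardinal.mk_eq_aleph0 ℕ]
      _ ≤ Cardinal.continuum ^ Cardinal.aleph0 :=
          Cardinal.power_le_power_right hScard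
      _ = Cardinal.continuum := Cardinal.continuum_power_aleph0

end Stmt7Aux

/-- `cof(I^r_{n,σ-fin}) = 𝔠 = 2^ℵ₀`. -/
theorem stmt7 (n : ℕ) (r : ℝ) (hn : 1 ≤ n) (hr0 : 0 < r) (hrn : r < n) :
    cofOf {H : Set (EuclideanSpace ℝ (Fin n)) | SigmaFiniteHausdorff n r H} =
      Cardinal.continuum := by
  have hrn' : r < (n : ℝ) := hrn
  obtain ⟨C, hC, hcof, hcard⟩ := Stmt7Aux.upper_bound (n := n) hr0
  apply le_antisymm
  · exact le_trans (csInf_le' ⟨C, hC, hcof, rfl⟩) hcard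
  · refine le_csInf ⟨Cardinal.mk C, ⟨C, hC, hcof, rfl⟩⟩ ?_
    rintro b ⟨D, hD, hDcof, rfl⟩
    exact Stmt7Aux.lower_bound hn hr0 hrn' hD hDcof
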